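/- (High density of μ_t.) Let ε ∈ (0,1) and assume that for every t ∈ {1,…,T}: if b_{t+1} = 1 then P_{x∼D}[N_{t+1}(x) = c_t + 1] > ε/32. Then for every t ∈ {1,…,T}, d(μ_t) ≥ P_{x∼D}[M_t(x) ≥ c_t] > ε/32. -/

import Mathlib

open MeasureTheory

/-- High density of `μ_t`: if for every `t ∈ {1,…,T}`, `b_{t+1} = 1` implies
`P_{x∼D}[N_{t+1}(x) = c_t+1] > ε/32`, then for every `t ∈ {1,…,T}`,
`d(μ_t) ≥ P_{x∼D}[M_t(x) ≥ c_t] > ε/32` where `μ_t(x) = exp(M_t(x) − c_t)`. -/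
theorem rMetaBoost_high_density
    {X : Type*} [MeasurableSpace X]
    (D : Measure X) [IsProbabilityMeasure D]
    (f : X → ℝ) (hfm : Measurable f) (hfpm : ∀ x, f x = -1 ∨ f x = 1)
    (T : ℕ) (hT : 0 < T)
    (h : ℕ → X → ℝ) (hhm : ∀ t, Measurable (h t)) (hhpm : ∀ t x, h t x = -1 ∨ h t x = 1)
    (b : ℕ → ℝ) (hb : ∀ t, b t = 0 ∨ b t = 1)
    (c : ℕ → ℝ) (N M : ℕ → X → ℝ)
    (hc1 : c 1 = 0) (hN1 : ∀ x, N 1 x = 0) (hM1 : ∀ x, M 1 x = 0)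
    (hcrec : ∀ t, 1 ≤ t → t ≤ T → c (t + 1) = c t + b (t + 1))
    (hNrec : ∀ t, 1 ≤ t → t ≤ T → ∀ x,
      N (t + 1) x = M t x + if h t x ≠ f x then 1 else 0)
    (hMrec : ∀ t, 1 ≤ t → t ≤ T → ∀ x, M (t + 1) x = min (N (t + 1) x) (c (t + 1)))
    (ε : ℝ) (hε : ε ∈ Set.Ioo (0 : ℝ) 1)
    (hthr : ∀ t, 1 ≤ t → t ≤ T → b (t + 1) = 1 →
      ENNReal.ofReal (ε / 32) < D {x | N (t + 1) x = c t + 1}) :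
    ∀ t, 1 ≤ t → t ≤ T →
      ε / 32 < (D {x | c t ≤ M t x}).toReal ∧
      (D {x | c t ≤ M t x}).toReal ≤ ∫ x, Real.exp (M t x - c t) ∂D := by
  have key : ∀ t, 1 ≤ t → t ≤ T → Measurable (M t) ∧ (∀ x, M t x ≤ c t) ∧
      ENNReal.ofReal (ε / 32) < D {x | c t ≤ M t x} := by
    intro t ht
    induction t, ht using Nat.le_induction with
    | base =>
      intro _
      have hM : M 1 = fun _ => (0:ℝ) := funext hM1
      refine ⟨by rw [hM]; exact measurable_const, fun x => by rw [hM1 x, hc1], ?_⟩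
      have : {x : X | c 1 ≤ M 1 x} = Set.univ := by
        ext x; simp [hM1 x, hc1]
      rw [this, measure_univ]
      have : ε / 32 < 1 := by linarith [hε.1, hε.2]
      exact ENNReal.ofReal_lt_one.mpr this
    | succ n hn IH =>
      intro hn1T
      have hnT : n ≤ T := Nat.le_of_succ_le hn1T
      obtain ⟨hMmeas, hMle, hDlt⟩ := IH hnT
      have hNeq : N (n+1) = fun x => M n x + if h n x ≠ f x then 1 else 0 :=
        funext (hNrec n hn hnT)
      have hsetm : MeasurableSet {x | h n x ≠ f x} :=
        (measurableSet_eq_fun (hhm n) hfm).compl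
      have hNmeas : Measurable (N (n+1)) := by
        rw [hNeq]
        exact hMmeas.add (Measurable.ite hsetm measurable_const measurable_const)
      have hMeq : M (n+1) = fun x => min (N (n+1) x) (c (n+1)) :=
        funext (hMrec n hn hnT)
      have hMmeas' : Measurable (M (n+1)) := by
        rw [hMeq]; exact hNmeas.min measurable_const
      have hMle' : ∀ x, M (n+1) x ≤ c (n+1) := fun x => by
        rw [hMrec n hn hnT x]; exact min_le_right _ _
      refine ⟨hMmeas', hMle', ?_⟩
      rcases hb (n+1) with hb0 | hb1
      · have hcc : c (n+1) = c n := by rw [hcrec n hn hnT, hb0, add_zero]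
        refine lt_of_lt_of_le hDlt (measure_mono ?_)
        intro x hx
        simp only [Set.mem_setOf_eq] at hx ⊢
        rw [hMrec n hn hnT x, hcc, le_min_iff]
        have hind : (0:ℝ) ≤ if h n x ≠ f x then 1 else 0 := by positivity
        constructor
        · rw [hNrec n hn hnT x]; linarith
        · exact le_rfl
      · have hcc : c (n+1) = c n + 1 := by rw [hcrec n hn hnT, hb1]
        refine lt_of_lt_of_le (hthr n hn hnT hb1) (measure_mono ?_)
        intro x hx
        simp only [Set.mem_setOf_eq] at hx ⊢
        rw [hMrec n hn hnT x, hcc, le_min_iff, hx]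
        exact ⟨le_refl _, le_refl _⟩
  intro t ht htT
  obtain ⟨hm, hle, hlt⟩ := key t ht htT
  have hS : MeasurableSet {x | c t ≤ M t x} := measurableSet_le measurable_const hm
  constructor
  · exact (ENNReal.ofReal_lt_iff_lt_toReal (div_nonneg hε.1.le (by norm_num)) (measure_ne_top D _)).mp hlt
  · set g : X → ℝ := fun x => Real.exp (M t x - c t) with hg
    have hgm : Measurable g := (hm.sub measurable_const).exp
    have hgle : ∀ x, g x ≤ 1 := fun x => by
      have : M t x - c t ≤ 0 := by linarith [hle x]
      exact Real.exp_le_one_iff.mpr this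
    have hgint : Integrable g D := by
      refine (integrable_const (1:ℝ)).mono' hgm.aestronglyMeasurable ?_
      filter_upwards with x
      rw [Real.norm_eq_abs, abs_of_pos (Real.exp_pos _)]
      exact hgle x
    have hind : ((D {x | c t ≤ M t x}).toReal : ℝ)
        = ∫ x, ({x | c t ≤ M t x}).indicator (fun _ => (1:ℝ)) x ∂D := by
      rw [integral_indicator_const (1:ℝ) hS]
      simp
      rfl
    rw [hind]
    refine integral_mono ((integrable_const (1:ℝ)).indicator hS) hgint ?_
    intro x
    by_cases hx : x ∈ {x | c t ≤ M t x}
    · rw [Set.indicator_of_mem hx]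
      have : (0:ℝ) ≤ M t x - c t := by
        simp only [Set.mem_setOf_eq] at hx; linarith
      simpa [g] using Real.one_le_exp this
    · rw [Set.indicator_of_notMem hx]
      exact le_of_lt (Real.exp_pos _)
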